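/- arXiv:1909.07681 — 3 statements merged into one kernel-verified Lean document; each statement's English description precedes it below -/
import Mathlib

section
/- Let E be a Banach lattice and let P : E → E be a band projection, i.e., a continuous linear map with P ∘ P = P and 0 ≤ P x ≤ x for every x ≥ 0. Then P is uaw-continuous: for every net (x_α) indexed by a directed set and every x ∈ E, if (x_α) uaw-converges to x (that is, for every u ∈ E with u ≥ 0 the net |x_α − x| ⊓ u converges to 0 in the weak topology of E), then (P x_α) uaw-converges to P x. -/
open Filter Topology

/-- a band projection on a Banach lattice is uaw-continuous (for nets). -/
theorem band_projection_uaw_continuous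
    {E : Type*} [NormedAddCommGroup E] [Lattice E] [HasSolidNorm E] [IsOrderedAddMonoid E] [NormedSpace ℝ E] [CompleteSpace E]
    (P : E →L[ℝ] E)
    (hidem : ∀ x : E, P (P x) = P x)
    (hband : ∀ x : E, 0 ≤ x → 0 ≤ P x ∧ P x ≤ x)
    (ι : Type*) [Preorder ι] [IsDirected ι (· ≤ ·)] [Nonempty ι]
    (x : ι → E) (x₀ : E)
    (hx : ∀ u : E, 0 ≤ u → ∀ f : E →L[ℝ] ℝ,
      Tendsto (fun i => f (|x i - x₀| ⊓ u)) atTop (𝓝 0)) :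
    ∀ u : E, 0 ≤ u → ∀ f : E →L[ℝ] ℝ,
      Tendsto (fun i => f (|P (x i) - P x₀| ⊓ u)) atTop (𝓝 0) := by
  have hpos : ∀ x : E, 0 ≤ x → 0 ≤ P x := fun x hx => (hband x hx).1
  have hmono : ∀ a b : E, a ≤ b → P a ≤ P b := by
    intro a b hab
    have h := hpos (b - a) (sub_nonneg.2 hab)
    rw [map_sub] at h
    exact sub_nonneg.1 h
  -- Q = I - P is also positive and monotone
  have hq : ∀ x : E, 0 ≤ x → 0 ≤ x - P x := fun x hx => sub_nonneg.2 (hband x hx).2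
  have hqmono : ∀ a b : E, a ≤ b → a - P a ≤ b - P b := by
    intro a b hab
    have h := hq (b - a) (sub_nonneg.2 hab)
    rw [map_sub] at h
    have e : b - a - (P b - P a) = (b - P b) - (a - P a) := by abel
    rw [e] at h
    exact sub_nonneg.1 h
  have key : ∀ y u : E, 0 ≤ u → |P y| ⊓ u = P (|y| ⊓ u) := by
    intro y u hu
    -- easy direction of the modulus: |P y| ≤ P |y|
    have h1 : |P y| ≤ P |y| := by
      have hA : P y ≤ P |y| := hmono _ _ (le_abs_self y)
      have hB : -P y ≤ P |y| := by
        have h := hmono (-y) |y| (neg_le_abs y)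
        rwa [map_neg] at h
      exact abs_le'.2 ⟨hA, hB⟩
    -- |y - P y| ≤ |y| - P |y|
    have hq1 : |y - P y| ≤ |y| - P |y| := by
      have hA : y - P y ≤ |y| - P |y| := hqmono _ _ (le_abs_self y)
      have hB : -(y - P y) ≤ |y| - P |y| := by
        have h := hqmono (-|y|) y (neg_le.2 (neg_le_abs y))
        rw [map_neg] at h
        have e : -|y| - -P |y| = -(|y| - P |y|) := by abel
        rw [e] at h
        exact neg_le.1 h
      exact abs_le'.2 ⟨hA, hB⟩
    -- P |y - P y| = 0
    have hq0 : P |y - P y| = 0 := by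
      have hle : P |y - P y| ≤ P (|y| - P |y|) := hmono _ _ hq1
      have hz : P (|y| - P |y|) = 0 := by rw [map_sub, hidem, sub_self]
      rw [hz] at hle
      exact le_antisymm hle (hpos _ (abs_nonneg _))
    -- hard direction: P |y| ≤ |P y|
    have h4 : P |y| ≤ |P y| := by
      have htr : |y| ≤ |P y| + |y - P y| := by
        have e : y = P y + (y - P y) := by abel
        calc |y| = |P y + (y - P y)| := by rw [← e]
          _ ≤ |P y| + |y - P y| := abs_add_le _ _
      calc P |y| ≤ P (|P y| + |y - P y|) := hmono _ _ htr
        _ = P |P y| + P |y - P y| := map_add _ _ _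
        _ = P |P y| := by rw [hq0, add_zero]
        _ ≤ |P y| := (hband _ (abs_nonneg _)).2
    apply le_antisymm
    · -- m := |P y| ⊓ u satisfies m = P m and m ≤ |y| ⊓ u
      set m := |P y| ⊓ u with hm
      have hm0 : 0 ≤ m := le_inf (abs_nonneg _) hu
      have hmP : m ≤ P |y| := le_trans inf_le_left h1
      have hqm : m - P m ≤ 0 := by
        have h := hqmono m (P |y|) hmP
        rwa [hidem, sub_self] at h
      have hfix : P m = m :=
        le_antisymm ((hband m hm0).2) (sub_nonpos.1 hqm)
      have hmle : m ≤ |y| ⊓ u :=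
        le_inf (hmP.trans ((hband _ (abs_nonneg _)).2)) inf_le_right
      calc m = P m := hfix.symm
        _ ≤ P (|y| ⊓ u) := hmono _ _ hmle
    · exact le_inf ((hmono _ _ inf_le_left).trans h4)
        (((hband _ (le_inf (abs_nonneg _) hu)).2).trans inf_le_right)
  intro u hu f
  have h := hx u hu (f.comp P)
  refine h.congr fun i => ?_
  simp only [ContinuousLinearMap.comp_apply]
  congr 1
  rw [← key (x i - x₀) u hu, map_sub]
end

section
/- Let E and F be Banach lattices and let T : E → F be a surjective continuous lattice homomorphism. If T is a Dunford-Pettis operator, then T is σ-unbounded Dunford-Pettis. -/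
open Filter Topology

/-- The class `NormedLatticeAddCommGroup` as it stood in the older Mathlib (removed since). -/
class NormedLatticeAddCommGroup (α : Type*) extends NormedAddCommGroup α, Lattice α where
  add_le_add_left : ∀ a b : α, a ≤ b → ∀ c : α, c + a ≤ c + b
  solid : ∀ a b : α, |a| ≤ |b| → ‖a‖ ≤ ‖b‖

/-- A sequence in a Banach lattice is uaw-null if `|x n| ⊓ u` converges weakly to `0`
for every `u ≥ 0`. -/
def UawNullSeq {E : Type*} [NormedLatticeAddCommGroup E] [NormedSpace ℝ E]
    (x : ℕ → E) : Prop :=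
  ∀ u : E, 0 ≤ u → ∀ f : E →L[ℝ] ℝ,
    Tendsto (fun n => f (|x n| ⊓ u)) atTop (𝓝 0)

/-- A sequence in a Banach lattice is un-null if `‖|y n| ⊓ v‖ → 0` for every `v ≥ 0`. -/
def UnNullSeq {F : Type*} [NormedLatticeAddCommGroup F] [NormedSpace ℝ F]
    (y : ℕ → F) : Prop :=
  ∀ v : F, 0 ≤ v → Tendsto (fun n => ‖|y n| ⊓ v‖) atTop (𝓝 0)

/-- A sequence is weakly null if `f (x n) → 0` for every continuous linear functional `f`. -/
def WeaklyNullSeq {E : Type*} [NormedAddCommGroup E] [NormedSpace ℝ E]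
    (x : ℕ → E) : Prop :=
  ∀ f : E →L[ℝ] ℝ, Tendsto (fun n => f (x n)) atTop (𝓝 0)

/-- σ-unbounded Dunford-Pettis operator. -/
def SigmaUDP {E F : Type*} [NormedLatticeAddCommGroup E] [NormedSpace ℝ E]
    [NormedLatticeAddCommGroup F] [NormedSpace ℝ F] (T : E →L[ℝ] F) : Prop :=
  ∀ x : ℕ → E, (∃ C : ℝ, ∀ n, ‖x n‖ ≤ C) → UawNullSeq x → UnNullSeq fun n => T (x n)

/-- Dunford-Pettis operator: maps weakly null sequences to norm null sequences. -/
def DunfordPettis {E F : Type*} [NormedAddCommGroup E] [NormedSpace ℝ E]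
    [NormedAddCommGroup F] [NormedSpace ℝ F] (T : E →L[ℝ] F) : Prop :=
  ∀ x : ℕ → E, WeaklyNullSeq x → Tendsto (fun n => ‖T (x n)‖) atTop (𝓝 0)

/-- A net (indexed by a directed preorder) is uaw-null. -/
def UawNullNet {E : Type*} [NormedLatticeAddCommGroup E] [NormedSpace ℝ E]
    {ι : Type} [Preorder ι] (x : ι → E) : Prop :=
  ∀ u : E, 0 ≤ u → ∀ f : E →L[ℝ] ℝ,
    Tendsto (fun i => f (|x i| ⊓ u)) atTop (𝓝 0)

/-- A net (indexed by a directed preorder) is un-null. -/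
def UnNullNet {F : Type*} [NormedLatticeAddCommGroup F] [NormedSpace ℝ F]
    {ι : Type} [Preorder ι] (y : ι → F) : Prop :=
  ∀ v : F, 0 ≤ v → Tendsto (fun i => ‖|y i| ⊓ v‖) atTop (𝓝 0)

/-- Unbounded Dunford-Pettis operator: maps norm bounded uaw-null nets to un-null nets. -/
def UDP {E F : Type*} [NormedLatticeAddCommGroup E] [NormedSpace ℝ E]
    [NormedLatticeAddCommGroup F] [NormedSpace ℝ F] (T : E →L[ℝ] F) : Prop :=
  ∀ (ι : Type) [Preorder ι] [IsDirected ι (· ≤ ·)] [Nonempty ι] (x : ι → E),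
    (∃ C : ℝ, ∀ i, ‖x i‖ ≤ C) → UawNullNet x → UnNullNet fun i => T (x i)

/-- uaw-continuous operator: maps norm bounded uaw-null nets to uaw-null nets. -/
def UawContinuous {E F : Type*} [NormedLatticeAddCommGroup E] [NormedSpace ℝ E]
    [NormedLatticeAddCommGroup F] [NormedSpace ℝ F] (T : E →L[ℝ] F) : Prop :=
  ∀ (ι : Type) [Preorder ι] [IsDirected ι (· ≤ ·)] [Nonempty ι] (x : ι → E),
    (∃ C : ℝ, ∀ i, ‖x i‖ ≤ C) → UawNullNet x → UawNullNet fun i => T (x i)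

/-- A Banach lattice has order continuous norm if every decreasing net with infimum `0`
converges to `0` in norm. -/
def OrderContinuousNorm (E : Type*) [NormedLatticeAddCommGroup E] : Prop :=
  ∀ (ι : Type) [Preorder ι] [IsDirected ι (· ≤ ·)] [Nonempty ι] (x : ι → E),
    Antitone x → IsGLB (Set.range x) 0 → Tendsto (fun i => ‖x i‖) atTop (𝓝 0)

/-- The norm dual of `E` has order continuous norm. -/
def DualOrderContinuousNorm (E : Type*) [NormedLatticeAddCommGroup E] [NormedSpace ℝ E] :
    Prop :=
  ∀ (ι : Type) [Preorder ι] [IsDirected ι (· ≤ ·)] [Nonempty ι] (f : ι → E →L[ℝ] ℝ),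
    (∀ i, ∀ x : E, 0 ≤ x → 0 ≤ f i x) →
    (∀ i j, i ≤ j → ∀ x : E, 0 ≤ x → f j x ≤ f i x) →
    (∀ x : E, 0 ≤ x → IsGLB (Set.range fun i => f i x) 0) →
    Tendsto (fun i => ‖f i‖) atTop (𝓝 0)

/-- Strong order unit. -/
def HasStrongOrderUnit (F : Type*) [NormedLatticeAddCommGroup F] : Prop :=
  ∃ e : F, 0 ≤ e ∧ ∀ y : F, ∃ n : ℕ, |y| ≤ n • e

/-- AM-space. -/
def IsAMSpace (E : Type*) [NormedLatticeAddCommGroup E] : Prop :=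
  ∀ x y : E, 0 ≤ x → 0 ≤ y → ‖x ⊔ y‖ = max ‖x‖ ‖y‖

/-- An atom of a Banach lattice. -/
def IsLatticeAtom {E : Type*} [NormedLatticeAddCommGroup E] [NormedSpace ℝ E] (a : E) :
    Prop :=
  0 < a ∧ ∀ x : E, 0 ≤ x → x ≤ a → ∃ c : ℝ, x = c • a

/-- An atomic Banach lattice: below every `x > 0` there is an atom. -/
def IsAtomicLattice (E : Type*) [NormedLatticeAddCommGroup E] [NormedSpace ℝ E] : Prop :=
  ∀ x : E, 0 < x → ∃ a : E, IsLatticeAtom a ∧ a ≤ x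

/-- Relatively sequentially un-compact set. -/
def RelSeqUnCompact {F : Type*} [NormedLatticeAddCommGroup F] [NormedSpace ℝ F]
    (A : Set F) : Prop :=
  ∀ y : ℕ → F, (∀ n, y n ∈ A) →
    ∃ (z : F) (φ : ℕ → ℕ), StrictMono φ ∧
      ∀ v : F, 0 ≤ v → Tendsto (fun k => ‖|y (φ k) - z| ⊓ v‖) atTop (𝓝 0)

/-- Sequentially un-compact operator. -/
def SeqUnCompactOp {E F : Type*} [NormedLatticeAddCommGroup E] [NormedSpace ℝ E]
    [NormedLatticeAddCommGroup F] [NormedSpace ℝ F] (S : E →L[ℝ] F) : Prop :=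
  RelSeqUnCompact (S '' Metric.closedBall 0 1)

/-- M-weakly compact operator. -/
def MWeaklyCompact {E F : Type*} [NormedLatticeAddCommGroup E] [NormedSpace ℝ E]
    [NormedAddCommGroup F] [NormedSpace ℝ F] (T : E →L[ℝ] F) : Prop :=
  ∀ x : ℕ → E, (∃ C : ℝ, ∀ n, ‖x n‖ ≤ C) →
    (∀ i j, i ≠ j → |x i| ⊓ |x j| = 0) →
    Tendsto (fun n => ‖T (x n)‖) atTop (𝓝 0)

/-- L-weakly compact operator. -/
def LWeaklyCompact {E F : Type*} [NormedAddCommGroup E] [NormedSpace ℝ E]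
    [NormedLatticeAddCommGroup F] [NormedSpace ℝ F] (T : E →L[ℝ] F) : Prop :=
  ∀ y : ℕ → F, (∀ n, ∃ a ∈ T '' Metric.closedBall 0 1, |y n| ≤ |a|) →
    (∀ i j, i ≠ j → |y i| ⊓ |y j| = 0) →
    Tendsto (fun n => ‖y n‖) atTop (𝓝 0)

/-- Relatively weakly compact subset of a normed space. -/
def RelWeaklyCompact {F : Type*} [NormedAddCommGroup F] [NormedSpace ℝ F] (S : Set F) :
    Prop :=
  IsCompact (closure ((toWeakSpace ℝ F) '' S))

/-- weak Dunford-Pettis operator. -/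
def WeakDunfordPettis {E F : Type*} [NormedAddCommGroup E] [NormedSpace ℝ E]
    [NormedAddCommGroup F] [NormedSpace ℝ F] (T : E →L[ℝ] F) : Prop :=
  ∀ x : ℕ → E, WeaklyNullSeq x →
    ∀ f : ℕ → (F →L[ℝ] ℝ),
      (∀ G : (F →L[ℝ] ℝ) →L[ℝ] ℝ, Tendsto (fun n => G (f n)) atTop (𝓝 0)) →
      Tendsto (fun n => f n (T (x n))) atTop (𝓝 0)

/-- Dedekind complete lattice. -/
def DedekindComplete (E : Type*) [Lattice E] : Prop :=
  ∀ s : Set E, s.Nonempty → BddAbove s → ∃ a, IsLUB s a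

/-- Dedekind σ-complete lattice. -/
def DedekindSigmaComplete (E : Type*) [Lattice E] : Prop :=
  ∀ s : Set E, s.Countable → s.Nonempty → BddAbove s → ∃ a, IsLUB s a

instance NormedLatticeAddCommGroup.toAddLeftMono' {α : Type*} [NormedLatticeAddCommGroup α] :
    AddLeftMono α :=
  ⟨fun c _ _ h => NormedLatticeAddCommGroup.add_le_add_left _ _ h c⟩

/-- a surjective continuous lattice homomorphism which is Dunford-Pettis
is σ-unbounded Dunford-Pettis. -/
theorem surjective_latticeHom_dunfordPettis_sigmaUDP
    {E F : Type*} [NormedLatticeAddCommGroup E] [NormedSpace ℝ E] [CompleteSpace E]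
    [NormedLatticeAddCommGroup F] [NormedSpace ℝ F] [CompleteSpace F]
    (T : E →L[ℝ] F) (hsurj : Function.Surjective T)
    (hhom : ∀ x y : E, T (x ⊔ y) = T x ⊔ T y)
    (hDP : DunfordPettis T) : SigmaUDP T := by
  -- T preserves inf and absolute value
  have hinf : ∀ x y : E, T (x ⊓ y) = T x ⊓ T y := by
    intro x y
    have h : x ⊓ y = x + y - (x ⊔ y) := by
      rw [← inf_add_sup]; abel
    rw [h, map_sub, map_add, hhom, ← inf_add_sup (T x) (T y)]; abel
  have habs : ∀ x : E, T |x| = |T x| := by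
    intro x
    rw [abs, hhom, map_neg, ← abs]
  intro x _hbdd huaw v hv
  obtain ⟨w, hw⟩ := hsurj v
  have hTu : T (w ⊔ 0) = v := by rw [hhom, map_zero, hw, sup_of_le_left hv]
  have hkey : ∀ n, |T (x n)| ⊓ v = T (|x n| ⊓ (w ⊔ 0)) := by
    intro n; rw [hinf, habs, hTu]
  simp only [hkey]
  exact hDP (fun n => |x n| ⊓ (w ⊔ 0)) (fun f => huaw (w ⊔ 0) le_sup_right f)
end

section
/- Let T : ℓ¹ → ℝ be the summation functional, T((x_n)) = Σ_{n=1}^∞ x_n. Then T is a compact operator (hence Dunford-Pettis), but T is not σ-unbounded Dunford-Pettis: the standard unit vectors (e_n) of ℓ¹ form a norm-bounded uaw-null sequence, while T e_n = 1 for every n, so (T e_n) does not converge to 0. -/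
open Filter Topology

noncomputable section

/-- The Banach lattice `ℓ¹` of absolutely summable real sequences. -/
abbrev ell1 : Type := lp (fun _ : ℕ => ℝ) 1

private lemma memℓp_sup {f g : ∀ _ : ℕ, ℝ} (hf : Memℓp f 1) (hg : Memℓp g 1) :
    Memℓp (fun i => f i ⊔ g i) 1 := by
  apply memℓp_gen
  have hf' := hf.summable (by norm_num)
  have hg' := hg.summable (by norm_num)
  refine Summable.of_nonneg_of_le (fun i => ?_) (fun i => ?_) (hf'.add hg')
  · positivity
  · simp only [ENNReal.toReal_one, Real.rpow_one, Real.norm_eq_abs]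
    rcases le_total (f i) (g i) with h | h
    · rw [max_eq_right h]; exact le_add_of_nonneg_left (abs_nonneg _)
    · rw [max_eq_left h]; exact le_add_of_nonneg_right (abs_nonneg _)

private lemma memℓp_inf {f g : ∀ _ : ℕ, ℝ} (hf : Memℓp f 1) (hg : Memℓp g 1) :
    Memℓp (fun i => f i ⊓ g i) 1 := by
  apply memℓp_gen
  have hf' := hf.summable (by norm_num)
  have hg' := hg.summable (by norm_num)
  refine Summable.of_nonneg_of_le (fun i => ?_) (fun i => ?_) (hf'.add hg')
  · positivity
  · simp only [ENNReal.toReal_one, Real.rpow_one, Real.norm_eq_abs]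
    rcases le_total (f i) (g i) with h | h
    · rw [min_eq_left h]; exact le_add_of_nonneg_right (abs_nonneg _)
    · rw [min_eq_right h]; exact le_add_of_nonneg_left (abs_nonneg _)

/-- The pointwise (coordinatewise) partial order on `ℓ¹`. -/
instance : PartialOrder (PreLp fun _ : ℕ => ℝ) :=
  inferInstanceAs (PartialOrder (∀ _ : ℕ, ℝ))

instance : PartialOrder ell1 := Subtype.partialOrder _

/-- The pointwise lattice structure on `ℓ¹`. -/
instance : Lattice ell1 where
  sup f g := ⟨fun i => f i ⊔ g i, memℓp_sup (lp.memℓp f) (lp.memℓp g)⟩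
  inf f g := ⟨fun i => f i ⊓ g i, memℓp_inf (lp.memℓp f) (lp.memℓp g)⟩
  le_sup_left f g := Subtype.coe_le_coe.mp fun _ => le_sup_left
  le_sup_right f g := Subtype.coe_le_coe.mp fun _ => le_sup_right
  sup_le f g h hf hg := Subtype.coe_le_coe.mp fun i =>
    sup_le (Subtype.coe_le_coe.mpr hf i) (Subtype.coe_le_coe.mpr hg i)
  inf_le_left f g := Subtype.coe_le_coe.mp fun _ => inf_le_left
  inf_le_right f g := Subtype.coe_le_coe.mp fun _ => inf_le_right
  le_inf f g h hf hg := Subtype.coe_le_coe.mp fun i =>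
    le_inf (Subtype.coe_le_coe.mpr hf i) (Subtype.coe_le_coe.mpr hg i)

/-- The standard unit vectors of `ℓ¹`. -/
def eseq (n : ℕ) : ell1 := lp.single 1 n 1

private lemma eseq_norm (n : ℕ) : ‖eseq n‖ = 1 := by
  have := lp.norm_single (E := fun _ : ℕ => ℝ) (p := 1) (by norm_num)
    n (1 : ℝ)
  simpa [eseq] using this

private lemma abs_inf_eq (u : ell1) (hu : 0 ≤ u) (n : ℕ) :
    |eseq n| ⊓ u = (u n ⊓ 1) • eseq n := by
  have hu' : ∀ i, 0 ≤ u i := fun i => Subtype.coe_le_coe.mpr hu i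
  apply lp.ext
  funext i
  have habs : (|eseq n| : ∀ _ : ℕ, ℝ) i = |eseq n i| := by
    show (eseq n i) ⊔ ((-(eseq n)) i) = |eseq n i|
    rw [lp.coeFn_neg]
    simp [abs]
  show (|eseq n| : ∀ _ : ℕ, ℝ) i ⊓ u i = ((u n ⊓ 1) • eseq n) i
  rw [habs, lp.coeFn_smul]
  by_cases h : i = n
  · subst h
    simp [eseq, lp.single_apply_self, inf_comm]
  · rw [show eseq n i = 0 from lp.single_apply_ne (E := fun _ : ℕ => ℝ) 1 n 1 h]
    rw [abs_zero, inf_eq_left.mpr (hu' i), Pi.smul_apply,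
      show ((eseq n : ∀ _ : ℕ, ℝ) i) = 0 from lp.single_apply_ne (E := fun _ : ℕ => ℝ) 1 n 1 h,
      smul_zero]

private lemma uaw_null (u : ell1) (hu : 0 ≤ u) (f : ell1 →L[ℝ] ℝ) :
    Tendsto (fun n => f (|eseq n| ⊓ u)) atTop (𝓝 0) := by
  have hu' : ∀ i, 0 ≤ u i := fun i => Subtype.coe_le_coe.mpr hu i
  have hsum : Summable (fun i => ‖u i‖ ^ (1 : ℝ)) :=
    (lp.memℓp u).summable (by norm_num)
  have hsum' : Summable (fun i => u i) := by
    refine hsum.congr fun i => ?_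
    simp [Real.norm_eq_abs, abs_of_nonneg (hu' i)]
  have hun : Tendsto (fun n => u n) atTop (𝓝 0) := hsum'.tendsto_atTop_zero
  have hnorm : Tendsto (fun n => ‖|eseq n| ⊓ u‖) atTop (𝓝 0) := by
    refine squeeze_zero (fun n => norm_nonneg _) (fun n => ?_) hun
    rw [abs_inf_eq u hu n, norm_smul, eseq_norm, mul_one, Real.norm_eq_abs,
      abs_of_nonneg (le_inf (hu' n) zero_le_one)]
    exact inf_le_left
  have hx : Tendsto (fun n => |eseq n| ⊓ u) atTop (𝓝 0) :=
    tendsto_zero_iff_norm_tendsto_zero.mpr hnorm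
  have := (f.continuous.tendsto 0).comp hx
  simpa [Function.comp_def] using this

/-- the summation functional `T : ℓ¹ → ℝ` is compact (hence Dunford-Pettis),
but not σ-unbounded Dunford-Pettis: the standard unit vectors form a norm bounded
uaw-null sequence with `T e_n = 1` for all `n`, so `(T e_n)` does not converge to `0`. -/
theorem summation_functional_compact_dunfordPettis_not_sigmaUDP
    (T : ell1 →L[ℝ] ℝ) (hT : ∀ x : ell1, T x = ∑' n, x n) :
    IsCompactOperator T ∧
    (∀ x : ℕ → ell1,
        (∀ f : ell1 →L[ℝ] ℝ, Tendsto (fun n => f (x n)) atTop (𝓝 0)) →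
        Tendsto (fun n => ‖T (x n)‖) atTop (𝓝 0)) ∧
    (∀ n, ‖eseq n‖ ≤ 1) ∧
    (∀ u : ell1, 0 ≤ u → ∀ f : ell1 →L[ℝ] ℝ,
        Tendsto (fun n => f (|eseq n| ⊓ u)) atTop (𝓝 0)) ∧
    (∀ n, T (eseq n) = 1) ∧
    ¬ Tendsto (fun n => T (eseq n)) atTop (𝓝 0) ∧
    ¬ (∀ x : ℕ → ell1, (∃ C : ℝ, ∀ n, ‖x n‖ ≤ C) →
        (∀ u : ell1, 0 ≤ u → ∀ f : ell1 →L[ℝ] ℝ,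
          Tendsto (fun n => f (|x n| ⊓ u)) atTop (𝓝 0)) →
        ∀ v : ℝ, 0 ≤ v → Tendsto (fun n => ‖|T (x n)| ⊓ v‖) atTop (𝓝 0)) := by
  have hTe : ∀ n, T (eseq n) = 1 := by
    intro n
    rw [hT]
    simp only [eseq]
    have key : ∀ m, m ≠ n → ((lp.single 1 n 1 : ell1) : ∀ _ : ℕ, ℝ) m = 0 :=
      fun m hmn => lp.single_apply_ne (E := fun _ : ℕ => ℝ) 1 n 1 hmn
    exact (tsum_eq_single n key).trans
      (lp.single_apply_self (E := fun _ : ℕ => ℝ) 1 n 1)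
  refine ⟨?_, ?_, ?_, uaw_null, hTe, ?_, ?_⟩
  · refine ⟨Metric.closedBall 0 ‖T‖, isCompact_closedBall 0 ‖T‖, ?_⟩
    refine Filter.mem_of_superset (Metric.ball_mem_nhds 0 one_pos) (fun x hx => ?_)
    simp only [Set.mem_preimage, Metric.mem_closedBall, dist_zero_right]
    calc ‖T x‖ ≤ ‖T‖ * ‖x‖ := T.le_opNorm x
      _ ≤ ‖T‖ * 1 := by
          refine mul_le_mul_of_nonneg_left ?_ (norm_nonneg T)
          exact (mem_ball_zero_iff.mp hx).le
      _ = ‖T‖ := mul_one _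
  · intro x hx
    simpa using tendsto_zero_iff_norm_tendsto_zero.mp (hx T)
  · intro n; rw [eseq_norm]
  · intro h
    have h1 : Tendsto (fun _ : ℕ => (1 : ℝ)) atTop (𝓝 0) := by
      simpa [hTe] using h
    exact one_ne_zero (tendsto_nhds_unique tendsto_const_nhds h1)
  · intro H
    have := H eseq ⟨1, fun n => (eseq_norm n).le⟩ uaw_null 1 zero_le_one
    have h1 : Tendsto (fun _ : ℕ => (1 : ℝ)) atTop (𝓝 0) := by
      have heq : (fun n => ‖|T (eseq n)| ⊓ (1:ℝ)‖) = fun _ => (1:ℝ) := by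
        funext n; rw [hTe]; norm_num
      rwa [heq] at this
    exact one_ne_zero (tendsto_nhds_unique tendsto_const_nhds h1)
end
end
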